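/- Let $k_b(x,y) = \sum_{n=0}^{\min(x,y)} \binom{x}{n}\binom{y}{n}$ on $V = \{0,1,2,\ldots\}$, and let $K_n = (k_b(x,y))_{0 \le x,y \le n}$. Then $K_n = L_n L_n^{tr}$ where $L_n$ is the lower-triangular Pascal matrix $(L_n)_{xy} = \binom{x}{y}$ ($y \le x$), $K_n$ is invertible with $K_n^{-1} = (L_n^{tr})^{-1} L_n^{-1}$, and the diagonal entries of $K_n^{-1}$ are $(K_n^{-1})_{xx} = \sum_{k=x}^{n} \binom{k}{x}^2$. Consequently, $\sup_n (K_n^{-1})_{xx} = \sum_{k=x}^{\infty}\binom{k}{x}^2 = \infty$, so no point mass $\delta_x$ belongs to the binomial RKHS $\mathscr{H}(k_b)$. -/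

import Mathlib

open Matrix

private lemma alt_sum_real (d : ℕ) :
    ∑ t ∈ Finset.range (d + 1), (-1 : ℝ) ^ t * (d.choose t : ℝ) =
      if d = 0 then 1 else 0 := by
  have h := Int.alternating_sum_range_choose (n := d)
  have h2 := congrArg (Int.cast : ℤ → ℝ) h
  push_cast at h2
  rw [h2]

private def Mmat (n : ℕ) : Matrix (Fin (n + 1)) (Fin (n + 1)) ℝ :=
  Matrix.of fun i j =>
    if (j : ℕ) ≤ (i : ℕ) then (-1 : ℝ) ^ ((i : ℕ) - (j : ℕ)) * ((i : ℕ).choose (j : ℕ) : ℝ) else 0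

private lemma Mmat_apply (n : ℕ) (i j : Fin (n + 1)) :
    Mmat n i j =
      if (j : ℕ) ≤ (i : ℕ) then (-1 : ℝ) ^ ((i : ℕ) - (j : ℕ)) * ((i : ℕ).choose (j : ℕ) : ℝ)
      else 0 := rfl

/-- Orthogonality: Pascal times signed Pascal is the identity. -/
private lemma key_sum (n i j : ℕ) (hi : i ≤ n) :
    ∑ k ∈ Finset.range (n + 1),
      (if k ≤ i then (i.choose k : ℝ) else 0) *
        (if j ≤ k then (-1 : ℝ) ^ (k - j) * (k.choose j : ℝ) else 0) =
      if i = j then 1 else 0 := by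
  by_cases hji : j ≤ i
  · have hsub : Finset.Icc j i ⊆ Finset.range (n + 1) := by
      intro k hk
      simp only [Finset.mem_Icc] at hk
      simp only [Finset.mem_range]; omega
    rw [← Finset.sum_subset hsub (by
      intro k _ hk
      simp only [Finset.mem_Icc, not_and_or, not_le] at hk
      rcases hk with hk | hk
      · rw [if_neg (show ¬ j ≤ k by omega)]; ring
      · rw [if_neg (show ¬ k ≤ i by omega)]; ring)]
    rw [← Finset.Ico_add_one_right_eq_Icc, Finset.sum_Ico_eq_sum_range]
    have hlen : i + 1 - j = (i - j) + 1 := by omega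
    rw [hlen]
    have hterm : ∀ t ∈ Finset.range ((i - j) + 1),
        (if j + t ≤ i then (i.choose (j + t) : ℝ) else 0) *
          (if j ≤ j + t then (-1 : ℝ) ^ (j + t - j) * ((j + t).choose j : ℝ) else 0) =
        (i.choose j : ℝ) * ((-1 : ℝ) ^ t * ((i - j).choose t : ℝ)) := by
      intro t ht
      simp only [Finset.mem_range] at ht
      rw [if_pos (by omega), if_pos (by omega)]
      have hc := Nat.choose_mul (n := i) (Nat.le_add_right j t)
      rw [Nat.add_sub_cancel_left] at hc
      have hc' : (i.choose (j + t) : ℝ) * ((j + t).choose j : ℝ)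
          = (i.choose j : ℝ) * ((i - j).choose t : ℝ) := by exact_mod_cast hc
      rw [Nat.add_sub_cancel_left]
      linear_combination (-1 : ℝ) ^ t * hc'
    rw [Finset.sum_congr rfl hterm, ← Finset.mul_sum, alt_sum_real]
    by_cases hij : i = j
    · subst hij
      simp
    · rw [if_neg (by omega), if_neg hij, mul_zero]
  · rw [if_neg (by omega)]
    apply Finset.sum_eq_zero
    intro k _
    by_cases hk : k ≤ i
    · rw [if_neg (show ¬ j ≤ k by omega)]; ring
    · rw [if_neg hk]; ring

/-- Let `k_b (x,y) = ∑_{n=0}^{min x y} C(x,n) C(y,n)` be the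
binomial kernel on `V = {0,1,2,…}`, `K n` its Gram matrix of size `n+1`, and
`L n` the lower-triangular Pascal matrix. Then `K n = L n (L n)ᵀ`; `K n` is
invertible with `(K n)⁻¹ = ((L n)ᵀ)⁻¹ (L n)⁻¹`; the diagonal entries are
`((K n)⁻¹)_{xx} = ∑_{k=x}^{n} C(k,x)²`; consequently
`sup_n ((K n)⁻¹)_{xx} = ∑_{k=x}^{∞} C(k,x)² = ∞` (the diagonal entries tend to
`∞`), so no point mass `δ_x` belongs to the RKHS `H(k_b)` (modeled abstractly
by kernel vectors `Kv x` with `⟪Kv x, Kv y⟫ = k_b x y` and dense span). -/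
theorem stmt_19 {H : Type*} [NormedAddCommGroup H] [InnerProductSpace ℝ H]
    [CompleteSpace H]
    (kb : ℕ → ℕ → ℝ)
    (hkb : ∀ x y : ℕ, kb x y =
      ∑ m ∈ Finset.range (min x y + 1), (x.choose m : ℝ) * (y.choose m : ℝ))
    (Kv : ℕ → H) (hKv : ∀ x y : ℕ, (inner ℝ (Kv x) (Kv y) : ℝ) = kb x y)
    (hdense : (Submodule.span ℝ (Set.range Kv)).topologicalClosure = ⊤)
    (L : (n : ℕ) → Matrix (Fin (n + 1)) (Fin (n + 1)) ℝ)
    (hL : ∀ (n : ℕ) (i j : Fin (n + 1)),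
      L n i j = if (j : ℕ) ≤ (i : ℕ) then ((i : ℕ).choose (j : ℕ) : ℝ) else 0)
    (Kmat : (n : ℕ) → Matrix (Fin (n + 1)) (Fin (n + 1)) ℝ)
    (hKmat : ∀ (n : ℕ) (i j : Fin (n + 1)), Kmat n i j = kb i j) :
    (∀ n : ℕ, Kmat n = L n * (L n)ᵀ) ∧
    (∀ n : ℕ, IsUnit (Kmat n) ∧ (Kmat n)⁻¹ = ((L n)ᵀ)⁻¹ * (L n)⁻¹) ∧
    (∀ (n : ℕ) (i : Fin (n + 1)),
      (Kmat n)⁻¹ i i = ∑ m ∈ Finset.Icc (i : ℕ) n, ((m.choose i : ℝ)) ^ 2) ∧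
    (∀ x : ℕ, Filter.Tendsto
      (fun n : ℕ => ∑ m ∈ Finset.Icc x n, ((m.choose x : ℝ)) ^ 2)
      Filter.atTop Filter.atTop) ∧
    (∀ x : ℕ, ¬ ∃ g : H, ∀ y : ℕ,
      (inner ℝ (Kv y) g : ℝ) = if y = x then 1 else 0) := by
  -- L * M = 1
  have hLM : ∀ n, L n * Mmat n = 1 := by
    intro n
    ext i j
    rw [Matrix.mul_apply]
    simp only [hL, Mmat_apply, Matrix.one_apply]
    rw [Fin.sum_univ_eq_sum_range (fun k =>
      (if k ≤ (i : ℕ) then ((i : ℕ).choose k : ℝ) else 0) *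
        (if (j : ℕ) ≤ k then (-1 : ℝ) ^ (k - (j : ℕ)) * (k.choose (j : ℕ) : ℝ) else 0))]
    rw [key_sum n i j (by omega)]
    simp [Fin.val_eq_val]
  have hML : ∀ n, Mmat n * L n = 1 := fun n => mul_eq_one_comm.mp (hLM n)
  have hLinv : ∀ n, (L n)⁻¹ = Mmat n := fun n => Matrix.inv_eq_left_inv (hML n)
  -- Part 1
  have hK : ∀ n, Kmat n = L n * (L n)ᵀ := by
    intro n
    ext i j
    rw [hKmat, hkb, Matrix.mul_apply]
    simp only [Matrix.transpose_apply, hL]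
    rw [Fin.sum_univ_eq_sum_range (fun k =>
      (if k ≤ (i : ℕ) then ((i : ℕ).choose k : ℝ) else 0) *
        (if k ≤ (j : ℕ) then ((j : ℕ).choose k : ℝ) else 0))]
    have hsub : Finset.range (min (i : ℕ) (j : ℕ) + 1) ⊆ Finset.range (n + 1) := by
      intro k hk
      simp only [Finset.mem_range] at hk ⊢
      omega
    rw [← Finset.sum_subset hsub (by
      intro k _ hk
      simp only [Finset.mem_range, not_lt] at hk
      by_cases h1 : k ≤ (i : ℕ)
      · rw [if_neg (show ¬ k ≤ (j : ℕ) by omega)]; ring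
      · rw [if_neg h1]; ring)]
    refine Finset.sum_congr rfl fun k hk => ?_
    simp only [Finset.mem_range] at hk
    rw [if_pos (by omega), if_pos (by omega)]
  -- units
  have hLu : ∀ n, IsUnit (L n) := fun n => (Matrix.isUnit_iff_isUnit_det _).mpr (Matrix.isUnit_det_of_right_inverse (hLM n))
  have hLtu : ∀ n, IsUnit ((L n)ᵀ) := fun n =>
    (Matrix.isUnit_iff_isUnit_det _).mpr (Matrix.isUnit_det_of_right_inverse (B := (Mmat n)ᵀ)
      (by rw [← Matrix.transpose_mul, hML, Matrix.transpose_one]))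
  have hKu : ∀ n, IsUnit (Kmat n) := fun n => by
    rw [hK n]; exact (hLu n).mul (hLtu n)
  have hKinv : ∀ n, (Kmat n)⁻¹ = ((L n)ᵀ)⁻¹ * (L n)⁻¹ := fun n => by
    rw [hK n, Matrix.mul_inv_rev]
  -- Part 3: diagonal of inverse
  have hdiag : ∀ (n : ℕ) (i : Fin (n + 1)),
      (Kmat n)⁻¹ i i = ∑ m ∈ Finset.Icc (i : ℕ) n, ((m.choose i : ℝ)) ^ 2 := by
    intro n i
    rw [hKinv n, ← Matrix.transpose_nonsing_inv, hLinv n, Matrix.mul_apply]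
    simp only [Matrix.transpose_apply, Mmat_apply]
    have hterm : ∀ k : Fin (n + 1),
        (if (i : ℕ) ≤ (k : ℕ) then (-1 : ℝ) ^ ((k : ℕ) - (i : ℕ)) * ((k : ℕ).choose i : ℝ) else 0) *
          (if (i : ℕ) ≤ (k : ℕ) then (-1 : ℝ) ^ ((k : ℕ) - (i : ℕ)) * ((k : ℕ).choose i : ℝ) else 0)
        = if (i : ℕ) ≤ (k : ℕ) then ((k : ℕ).choose i : ℝ) ^ 2 else 0 := by
      intro k
      by_cases h : (i : ℕ) ≤ (k : ℕ)
      · rw [if_pos h, if_pos h]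
        have hsq : ((-1 : ℝ) ^ ((k : ℕ) - (i : ℕ))) ^ 2 = 1 := by
          rw [← pow_mul]
          exact Even.neg_one_pow ⟨(k : ℕ) - (i : ℕ), by ring⟩
        calc ((-1 : ℝ) ^ ((k : ℕ) - (i : ℕ)) * ((k : ℕ).choose i : ℝ)) *
              ((-1 : ℝ) ^ ((k : ℕ) - (i : ℕ)) * ((k : ℕ).choose i : ℝ))
            = ((-1 : ℝ) ^ ((k : ℕ) - (i : ℕ))) ^ 2 * ((k : ℕ).choose i : ℝ) ^ 2 := by ring
          _ = ((k : ℕ).choose i : ℝ) ^ 2 := by rw [hsq, one_mul]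
      · simp [h]
    rw [Finset.sum_congr rfl fun k _ => hterm k]
    rw [Fin.sum_univ_eq_sum_range (fun k => if (i : ℕ) ≤ k then ((k).choose i : ℝ) ^ 2 else 0)]
    have hsub : Finset.Icc (i : ℕ) n ⊆ Finset.range (n + 1) := by
      intro k hk
      simp only [Finset.mem_Icc] at hk
      simp only [Finset.mem_range]; omega
    rw [← Finset.sum_subset hsub (by
      intro k hkr hk
      simp only [Finset.mem_Icc, not_and_or, not_le] at hk
      simp only [Finset.mem_range] at hkr
      rw [if_neg (by omega)])]
    refine Finset.sum_congr rfl fun k hk => ?_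
    simp only [Finset.mem_Icc] at hk
    rw [if_pos hk.1]
  -- Part 4: divergence
  have hlow : ∀ x n : ℕ, ((n + 1 - x : ℕ) : ℝ) ≤ ∑ m ∈ Finset.Icc x n, ((m.choose x : ℝ)) ^ 2 := by
    intro x n
    calc ((n + 1 - x : ℕ) : ℝ) = ∑ _m ∈ Finset.Icc x n, (1 : ℝ) := by
          rw [Finset.sum_const, Nat.card_Icc]; simp
      _ ≤ _ := Finset.sum_le_sum fun m hm => by
          have h1 : (1 : ℝ) ≤ (m.choose x : ℝ) := by
            exact_mod_cast Nat.choose_pos (Finset.mem_Icc.mp hm).1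
          nlinarith
  have htend : ∀ x : ℕ, Filter.Tendsto
      (fun n : ℕ => ∑ m ∈ Finset.Icc x n, ((m.choose x : ℝ)) ^ 2)
      Filter.atTop Filter.atTop := by
    intro x
    have h1 : Filter.Tendsto (fun n : ℕ => n + 1 - x) Filter.atTop Filter.atTop :=
      Filter.tendsto_atTop_atTop.mpr fun b => ⟨b + x, fun n hn => by omega⟩
    exact Filter.tendsto_atTop_mono (hlow x) (tendsto_natCast_atTop_atTop.comp h1)
  refine ⟨hK, fun n => ⟨hKu n, hKinv n⟩, hdiag, htend, ?_⟩
  -- Part 5: no point mass in the RKHS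
  rintro x ⟨g, hg⟩
  have hbound : ∀ N : ℕ, ∑ m ∈ Finset.Icc x (x + N), ((m.choose x : ℝ)) ^ 2 ≤ ‖g‖ ^ 2 := by
    intro N
    set n := x + N with hn
    have hx : x < n + 1 := by omega
    set ix : Fin (n + 1) := ⟨x, hx⟩ with hix
    set w : H := ∑ y : Fin (n + 1), (Kmat n)⁻¹ y ix • Kv (y : ℕ) with hw
    have hS : (Kmat n)⁻¹ ix ix = ∑ m ∈ Finset.Icc x n, ((m.choose x : ℝ)) ^ 2 := hdiag n ix
    have hmulinv : Kmat n * (Kmat n)⁻¹ = 1 :=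
      Matrix.mul_nonsing_inv _ (((Kmat n).isUnit_iff_isUnit_det).mp (hKu n))
    have hrow : ∀ y : Fin (n + 1),
        ∑ z : Fin (n + 1), (Kmat n)⁻¹ z ix * kb (y : ℕ) (z : ℕ) = if y = ix then 1 else 0 := by
      intro y
      have h1 := congrFun (congrFun hmulinv y) ix
      rw [Matrix.mul_apply, Matrix.one_apply] at h1
      rw [← h1]
      exact Finset.sum_congr rfl fun z _ => by rw [hKmat]; ring
    have hKvw : ∀ y : Fin (n + 1),
        (inner ℝ (Kv (y : ℕ)) (∑ z : Fin (n + 1), (Kmat n)⁻¹ z ix • Kv (z : ℕ)) : ℝ)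
          = if y = ix then 1 else 0 := by
      intro y
      rw [inner_sum]
      simp only [real_inner_smul_right, hKv]
      exact hrow y
    have hwg : (inner ℝ w g : ℝ) = (Kmat n)⁻¹ ix ix := by
      rw [hw, sum_inner]
      simp only [real_inner_smul_left, hg]
      rw [Finset.sum_eq_single ix]
      · rw [if_pos rfl, mul_one]
      · intro y _ hy
        rw [if_neg (fun h => hy (Fin.ext h)), mul_zero]
      · intro h; exact absurd (Finset.mem_univ ix) h
    have hww : (inner ℝ w w : ℝ) = (Kmat n)⁻¹ ix ix := by
      rw [hw, sum_inner]
      simp only [real_inner_smul_left]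
      calc ∑ y : Fin (n + 1), (Kmat n)⁻¹ y ix *
              (inner ℝ (Kv (y : ℕ)) (∑ z : Fin (n + 1), (Kmat n)⁻¹ z ix • Kv (z : ℕ)) : ℝ)
          = ∑ y : Fin (n + 1), (Kmat n)⁻¹ y ix * (if y = ix then 1 else 0) :=
            Finset.sum_congr rfl fun y _ => by rw [hKvw y]
        _ = (Kmat n)⁻¹ ix ix := by
            rw [Finset.sum_eq_single ix]
            · rw [if_pos rfl, mul_one]
            · intro y _ hy
              rw [if_neg hy, mul_zero]
            · intro h; exact absurd (Finset.mem_univ ix) h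
    have hSpos : 0 < ∑ m ∈ Finset.Icc x n, ((m.choose x : ℝ)) ^ 2 := by
      have h2 : (1 : ℝ) ≤ ((n + 1 - x : ℕ) : ℝ) := by
        exact_mod_cast (show 1 ≤ n + 1 - x by omega)
      linarith [hlow x n]
    have e1 : ∑ m ∈ Finset.Icc x n, ((m.choose x : ℝ)) ^ 2 ≤ ‖w‖ * ‖g‖ := by
      have h3 := real_inner_le_norm w g
      rw [hwg, hS] at h3
      exact h3
    have e2 : ‖w‖ ^ 2 = ∑ m ∈ Finset.Icc x n, ((m.choose x : ℝ)) ^ 2 := by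
      rw [← real_inner_self_eq_norm_sq, hww, hS]
    have hwpos : 0 < ‖w‖ := by nlinarith [e2, hSpos, norm_nonneg w]
    have hwle : ‖w‖ ≤ ‖g‖ := by nlinarith [e1, e2, hwpos]
    calc ∑ m ∈ Finset.Icc x n, ((m.choose x : ℝ)) ^ 2 = ‖w‖ ^ 2 := e2.symm
      _ ≤ ‖g‖ ^ 2 := by nlinarith [hwle, norm_nonneg w]
  obtain ⟨n, h1, h2⟩ :=
    (((htend x).eventually_gt_atTop (‖g‖ ^ 2)).and (Filter.eventually_ge_atTop x)).exists
  have h3 := hbound (n - x)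
  rw [show x + (n - x) = n from by omega] at h3
  linarith
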